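/- Let r > 0, let q ∈ ℝ³ be nonzero with ‖q‖ < 2r, let e_r = q/‖q‖, and let n ∈ ℝ³ be a unit vector with cos θ = nᵀe_r. For any perturbation δq = ξ₁·e_r + w where w is orthogonal to q and ‖δq‖ ≤ σ, the change of the hyperplane coordinate in direction n of the flipped point satisfies nᵀ(DF(q)(δq)) = −ξ₁·cos θ + ((2r − ‖q‖)/‖q‖)·nᵀw, and the tangential contribution is bounded by |nᵀw| ≤ σ·√(1 − cos²θ); in particular nᵀ(DF(q)(δq)) ≤ |ξ₁|·|cos θ| + ((2r − ‖q‖)/‖q‖)·σ·√(1 − cos²θ). -/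

import Mathlib

open scoped RealInnerProductSpace

/-- The Fréchet derivative of the spherical flipping map `F(q) = 2r·q/‖q‖ − q` at `q`,
as a map on vectors: `v ↦ (2r/‖q‖)·v − (2r/‖q‖³)·(qᵀv)·q − v`. -/
noncomputable def flipDeriv (r : ℝ) (q v : EuclideanSpace ℝ (Fin 3)) :
    EuclideanSpace ℝ (Fin 3) :=
  (2 * r / ‖q‖) • v - ((2 * r / ‖q‖ ^ 3) * ⟪q, v⟫) • q - v

theorem stmt_4 (r : ℝ) (hr : 0 < r) (q : EuclideanSpace ℝ (Fin 3)) (hq : q ≠ 0)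
    (hq2r : ‖q‖ < 2 * r)
    (er : EuclideanSpace ℝ (Fin 3)) (her : er = ‖q‖⁻¹ • q)
    (n : EuclideanSpace ℝ (Fin 3)) (hn : ‖n‖ = 1)
    (cosθ : ℝ) (hcos : cosθ = ⟪n, er⟫)
    (ξ₁ : ℝ) (w : EuclideanSpace ℝ (Fin 3)) (hw : ⟪q, w⟫ = 0)
    (σ : ℝ) (hσ : ‖ξ₁ • er + w‖ ≤ σ) :
    ⟪n, flipDeriv r q (ξ₁ • er + w)⟫
      = -ξ₁ * cosθ + (2 * r - ‖q‖) / ‖q‖ * ⟪n, w⟫ ∧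
    |⟪n, w⟫| ≤ σ * Real.sqrt (1 - cosθ ^ 2) ∧
    ⟪n, flipDeriv r q (ξ₁ • er + w)⟫
      ≤ |ξ₁| * |cosθ| + (2 * r - ‖q‖) / ‖q‖ * (σ * Real.sqrt (1 - cosθ ^ 2)) := by
  have hqpos : (0:ℝ) < ‖q‖ := norm_pos_iff.mpr hq
  have hc0 : ‖q‖ ≠ 0 := hqpos.ne'
  have her1 : ‖er‖ = 1 := by
    rw [her, norm_smul, norm_inv, norm_norm]
    field_simp
  have hqer : ⟪q, er⟫ = ‖q‖ := by
    rw [her, real_inner_smul_right, real_inner_self_eq_norm_sq]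
    field_simp
  have herw : ⟪er, w⟫ = 0 := by
    rw [her, real_inner_smul_left, hw]; ring
  have hq_eq : q = ‖q‖ • er := by
    rw [her, smul_smul]
    rw [mul_inv_cancel₀ hc0, one_smul]
  have key : flipDeriv r q (ξ₁ • er + w)
      = (-ξ₁) • er + ((2 * r - ‖q‖) / ‖q‖) • w := by
    rw [flipDeriv, inner_add_right, real_inner_smul_right, hqer, hw]
    set c := ‖q‖ with hcdef
    rw [hq_eq]
    match_scalars <;> field_simp <;> ring
  have heq1 : ⟪n, flipDeriv r q (ξ₁ • er + w)⟫
      = -ξ₁ * cosθ + (2 * r - ‖q‖) / ‖q‖ * ⟪n, w⟫ := by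
    rw [key, inner_add_right, real_inner_smul_right, real_inner_smul_right, ← hcos]
  have hinner0 : ⟪ξ₁ • er, w⟫ = 0 := by
    rw [real_inner_smul_left, herw]; ring
  have hσ0 : 0 ≤ σ := le_trans (norm_nonneg _) hσ
  have hwle : ‖w‖ ≤ σ := by
    have hsq : ‖ξ₁ • er + w‖ ^ 2 = ‖ξ₁ • er‖ ^ 2 + ‖w‖ ^ 2 := by
      rw [norm_add_sq_real, hinner0]; ring
    nlinarith [norm_nonneg (ξ₁ • er), norm_nonneg w, norm_nonneg (ξ₁ • er + w)]
  have hprojsq : ‖n - cosθ • er‖ ^ 2 = 1 - cosθ ^ 2 := by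
    rw [norm_sub_sq_real, real_inner_smul_right, ← hcos, hn, norm_smul, her1]
    simp [sq_abs]
    ring
  have hproj : ‖n - cosθ • er‖ = Real.sqrt (1 - cosθ ^ 2) := by
    rw [← hprojsq, Real.sqrt_sq (norm_nonneg _)]
  have hnw : ⟪n, w⟫ = ⟪n - cosθ • er, w⟫ := by
    rw [inner_sub_left, real_inner_smul_left, herw]; ring
  have habs : |⟪n, w⟫| ≤ σ * Real.sqrt (1 - cosθ ^ 2) := by
    rw [hnw]
    calc |⟪n - cosθ • er, w⟫| ≤ ‖n - cosθ • er‖ * ‖w‖ := abs_real_inner_le_norm _ _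
      _ ≤ Real.sqrt (1 - cosθ ^ 2) * σ := by
          rw [hproj]
          exact mul_le_mul_of_nonneg_left hwle (Real.sqrt_nonneg _)
      _ = σ * Real.sqrt (1 - cosθ ^ 2) := mul_comm _ _
  refine ⟨heq1, habs, ?_⟩
  rw [heq1]
  have hcoef : 0 ≤ (2 * r - ‖q‖) / ‖q‖ := div_nonneg (by linarith) hqpos.le
  have h1 : -ξ₁ * cosθ ≤ |ξ₁| * |cosθ| := by
    calc -ξ₁ * cosθ ≤ |(-ξ₁) * cosθ| := le_abs_self _
      _ = |ξ₁| * |cosθ| := by rw [abs_mul, abs_neg]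
  have h2 : (2 * r - ‖q‖) / ‖q‖ * ⟪n, w⟫
      ≤ (2 * r - ‖q‖) / ‖q‖ * (σ * Real.sqrt (1 - cosθ ^ 2)) :=
    mul_le_mul_of_nonneg_left (le_trans (le_abs_self _) habs) hcoef
  linarith
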